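/- For every α > 0 and every q₀ > 0, with f_α(q) = -q^{-α}, the ratio of the average position to the initial position of the free fall in the potential f_α equals κ(α) = Γ((4+α)/(2α))·Γ((1+α)/α) / (Γ((2+α)/α)·Γ((2+α)/(2α))); concretely, (∫₀^{q₀} q/√(f_α(q₀) - f_α(q)) dq) / (∫₀^{q₀} 1/√(f_α(q₀) - f_α(q)) dq) = κ(α)·q₀. -/

import Mathlib

open Set Real MeasureTheory

private lemma real_beta {a b : ℝ} (ha : 0 < a) (hb : 0 < b) :
    ∫ t in (0:ℝ)..1, t ^ (a - 1) * (1 - t) ^ (b - 1) =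
      Real.Gamma a * Real.Gamma b / Real.Gamma (a + b) := by
  have key : Complex.betaIntegral a b =
      ((∫ t in (0:ℝ)..1, t ^ (a - 1) * (1 - t) ^ (b - 1) : ℝ) : ℂ) := by
    rw [Complex.betaIntegral, ← intervalIntegral.integral_ofReal]
    refine intervalIntegral.integral_congr fun x hx => ?_
    rw [uIcc_of_le zero_le_one] at hx
    rw [show ((a:ℂ) - 1) = ((a - 1 : ℝ) : ℂ) by push_cast; ring,
      show ((b:ℂ) - 1) = ((b - 1 : ℝ) : ℂ) by push_cast; ring,
      show (1 - (x:ℂ)) = ((1 - x : ℝ) : ℂ) by push_cast; ring,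
      ← Complex.ofReal_cpow hx.1, ← Complex.ofReal_cpow (by linarith [hx.2])]
    push_cast
    ring
  have h := Complex.Gamma_mul_Gamma_eq_betaIntegral
    (s := (a:ℂ)) (t := (b:ℂ)) (by simpa using ha) (by simpa using hb)
  rw [key, ← Complex.ofReal_add, Complex.Gamma_ofReal, Complex.Gamma_ofReal,
    Complex.Gamma_ofReal, ← Complex.ofReal_mul, ← Complex.ofReal_mul] at h
  have := Complex.ofReal_injective h
  rw [this]
  field_simp [Real.Gamma_pos_of_pos (by linarith : (0:ℝ) < a + b) |>.ne']

private lemma point {α q₀ p t : ℝ} (hα : 0 < α) (hq₀ : 0 < q₀) (ht : t ∈ Ioo (0:ℝ) 1) :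
    |q₀ * ((1/α) * t ^ (1/α - 1))| *
      ((q₀ * t ^ (1/α)) ^ p / Real.sqrt (-(q₀ ^ (-α)) - -((q₀ * t ^ (1/α)) ^ (-α)))) =
    q₀ ^ (p + 1 + α/2) / α *
      (t ^ (((p+1)/α + 1/2) - 1) * (1 - t) ^ ((1/2:ℝ) - 1)) := by
  obtain ⟨ht0, ht1⟩ := ht
  have h1t : (0:ℝ) < 1 - t := by linarith
  have hu : (0:ℝ) < t ^ (1/α) := Real.rpow_pos_of_pos ht0 _
  have hqa : (q₀ * t ^ (1/α)) ^ (-α) = q₀ ^ (-α) * t⁻¹ := by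
    rw [Real.mul_rpow hq₀.le hu.le, ← Real.rpow_mul ht0.le,
      one_div, show α⁻¹ * -α = -1 by field_simp, Real.rpow_neg_one]
  have h1 : Real.sqrt (-(q₀ ^ (-α)) - -((q₀ * t ^ (1/α)) ^ (-α))) =
      (q₀ ^ (α/2))⁻¹ * ((1 - t) ^ ((1:ℝ)/2) / t ^ ((1:ℝ)/2)) := by
    rw [hqa, show -(q₀ ^ (-α)) - -(q₀ ^ (-α) * t⁻¹) = q₀ ^ (-α) * ((1-t)/t) by
        field_simp; ring,
      Real.sqrt_mul (by positivity), Real.sqrt_div (by positivity),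
      Real.sqrt_eq_rpow (q₀ ^ (-α)), ← Real.rpow_mul hq₀.le,
      Real.sqrt_eq_rpow (1-t), Real.sqrt_eq_rpow t,
      show -α * (1/2) = -(α/2) by ring, Real.rpow_neg hq₀.le]
  rw [h1, abs_of_pos (by positivity), Real.mul_rpow hq₀.le hu.le,
    ← Real.rpow_mul ht0.le,
    show (p+1)/α + 1/2 - 1 = 1/α * p + (1/α - 1) + 1/2 by field_simp; ring,
    Real.rpow_add hq₀ _ (α/2), Real.rpow_add hq₀ p 1, Real.rpow_one,
    Real.rpow_add ht0 _ (1/2), Real.rpow_add ht0 _ (1/α - 1),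
    show (1/2:ℝ) - 1 = -(1/2) by ring, Real.rpow_neg h1t.le]
  have h2 : ((1-t) ^ ((1:ℝ)/2)) ≠ 0 := by positivity
  have h3 : (t ^ ((1:ℝ)/2)) ≠ 0 := by positivity
  have h4 : (q₀ ^ (α/2)) ≠ 0 := by positivity
  field_simp

private lemma Jval {α q₀ : ℝ} (hα : 0 < α) (hq₀ : 0 < q₀) (p : ℝ) (hp : 0 ≤ p) :
    ∫ q in (0:ℝ)..q₀, q ^ p / Real.sqrt (-(q₀ ^ (-α)) - -(q ^ (-α))) =
      q₀ ^ (p + 1 + α/2) / α *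
        (Real.Gamma ((p+1)/α + 1/2) * Real.Gamma (1/2) / Real.Gamma ((p+1)/α + 1)) := by
  have ha : 0 < (p+1)/α + 1/2 := by positivity
  have himg : (fun t => q₀ * t ^ (1/α)) '' Ioo (0:ℝ) 1 = Ioo 0 q₀ := by
    ext y
    constructor
    · rintro ⟨t, ⟨ht0, ht1⟩, rfl⟩
      refine ⟨by positivity, ?_⟩
      have : t ^ (1/α) < 1 := Real.rpow_lt_one ht0.le ht1 (by positivity)
      nlinarith
    · rintro ⟨hy0, hy1⟩
      refine ⟨(y/q₀) ^ α, ⟨Real.rpow_pos_of_pos (by positivity) _,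
        Real.rpow_lt_one (by positivity) ((div_lt_one hq₀).2 hy1) hα⟩, ?_⟩
      show q₀ * ((y/q₀) ^ α) ^ (1/α) = y
      rw [← Real.rpow_mul (by positivity), mul_one_div, div_self hα.ne',
        Real.rpow_one, mul_div_cancel₀ _ hq₀.ne']
  have hderiv : ∀ t ∈ Ioo (0:ℝ) 1, HasDerivWithinAt (fun t => q₀ * t ^ (1/α))
      (q₀ * ((1/α) * t ^ (1/α - 1))) (Ioo (0:ℝ) 1) t := fun t ht =>
    ((Real.hasDerivAt_rpow_const (Or.inl ht.1.ne')).const_mul q₀).hasDerivWithinAt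
  have hinj : InjOn (fun t => q₀ * t ^ (1/α)) (Ioo (0:ℝ) 1) := by
    apply StrictMonoOn.injOn
    intro x hx y hy hxy
    exact mul_lt_mul_of_pos_left (Real.rpow_lt_rpow hx.1.le hxy (by positivity)) hq₀
  rw [intervalIntegral.integral_of_le hq₀.le, MeasureTheory.integral_Ioc_eq_integral_Ioo,
    ← himg,
    MeasureTheory.integral_image_eq_integral_abs_deriv_smul measurableSet_Ioo hderiv hinj]
  rw [MeasureTheory.setIntegral_congr_fun measurableSet_Ioo
    (fun t ht => by simpa [smul_eq_mul] using point hα hq₀ (t := t) ht (p := p))]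
  rw [MeasureTheory.integral_const_mul, ← MeasureTheory.integral_Ioc_eq_integral_Ioo,
    ← intervalIntegral.integral_of_le zero_le_one]
  rw [show (2⁻¹:ℝ) = 1/2 by norm_num, real_beta ha one_half_pos,
    show (p+1)/α + 1/2 + 1/2 = (p+1)/α + 1 by ring]

theorem mean_free_fall_ratio (α : ℝ) (hα : 0 < α) (q₀ : ℝ) (hq₀ : 0 < q₀) :
    (∫ q in (0:ℝ)..q₀, q / Real.sqrt (-(q₀ ^ (-α)) - -(q ^ (-α)))) /
      (∫ q in (0:ℝ)..q₀, 1 / Real.sqrt (-(q₀ ^ (-α)) - -(q ^ (-α)))) =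
    (Real.Gamma ((4 + α) / (2 * α)) * Real.Gamma ((1 + α) / α) /
      (Real.Gamma ((2 + α) / α) * Real.Gamma ((2 + α) / (2 * α)))) * q₀ := by
  have h1 : (∫ q in (0:ℝ)..q₀, q / Real.sqrt (-(q₀ ^ (-α)) - -(q ^ (-α)))) =
      ∫ q in (0:ℝ)..q₀, q ^ (1:ℝ) / Real.sqrt (-(q₀ ^ (-α)) - -(q ^ (-α))) := by
    refine intervalIntegral.integral_congr fun x _ => ?_
    rw [Real.rpow_one]
  have h0 : (∫ q in (0:ℝ)..q₀, 1 / Real.sqrt (-(q₀ ^ (-α)) - -(q ^ (-α)))) =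
      ∫ q in (0:ℝ)..q₀, q ^ (0:ℝ) / Real.sqrt (-(q₀ ^ (-α)) - -(q ^ (-α))) := by
    refine intervalIntegral.integral_congr fun x _ => ?_
    rw [Real.rpow_zero]
  rw [h1, h0, Jval hα hq₀ 1 zero_le_one, Jval hα hq₀ 0 le_rfl]
  have e1 : (4 + α) / (2 * α) = (1+1)/α + 1/2 := by field_simp; ring
  have e2 : (1 + α) / α = (0+1)/α + 1 := by field_simp; ring
  have e3 : (2 + α) / α = (1+1)/α + 1 := by field_simp; ring
  have e4 : (2 + α) / (2 * α) = (0+1)/α + 1/2 := by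
    field_simp
    ring
  rw [e1, e2, e3, e4]
  have g1 : 0 < Real.Gamma ((1+1)/α + 1/2) := Real.Gamma_pos_of_pos (by positivity)
  have g2 : 0 < Real.Gamma ((0+1)/α + 1) := Real.Gamma_pos_of_pos (by positivity)
  have g3 : 0 < Real.Gamma ((1+1)/α + 1) := Real.Gamma_pos_of_pos (by positivity)
  have g4 : 0 < Real.Gamma ((0+1)/α + 1/2) := Real.Gamma_pos_of_pos (by positivity)
  have gh : 0 < Real.Gamma (1/2 : ℝ) := Real.Gamma_pos_of_pos (by norm_num)
  have hx : q₀ ^ ((1:ℝ) + 1 + α/2) = q₀ * q₀ ^ ((0:ℝ) + 1 + α/2) := by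
    rw [show (1:ℝ) + 1 + α/2 = 1 + ((0:ℝ) + 1 + α/2) by ring, Real.rpow_add hq₀,
      Real.rpow_one]
  have hq : (q₀ : ℝ) ^ ((0:ℝ) + 1 + α/2) ≠ 0 := by positivity
  rw [hx]
  field_simp
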